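/- arXiv:1411.2017 — 4 statements merged into one kernel-verified Lean document; each statement's English description precedes it below -/
import Mathlib

section
/- For genotype space Σ² = {0,1}², define a fitness landscape w : Σ² → ℝ (injective on values at distinct genotypes). Define an edge from g to g' (adjacent genotypes, Hamming distance 1) to be ascending if w(g) < w(g'). Then there is no fitness landscape on Σ² satisfying all of: (A1) there is no ascending path from 00 to the global maximum g_max; (A2) there exist genotypes g¹, g² such that g_max's first bit equals g¹'s first bit and g_max's second bit equals g²'s second bit; (A3) for each k there is an ascending path from 00 to g^k; (A4) each g^k is a local peak (all Hamming neighbors have strictly lower fitness). -/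
/-- Two genotypes are adjacent iff they differ in exactly one position. -/
def Adj {L : ℕ} (g g' : Fin L → Bool) : Prop :=
  (Finset.univ.filter (fun i => g i ≠ g' i)).card = 1

/-- Strictly fitness-increasing path in the fitness graph. -/
def AscPath {L : ℕ} (w : (Fin L → Bool) → ℝ) : (Fin L → Bool) → (Fin L → Bool) → Prop :=
  Relation.ReflTransGen (fun g g' => Adj g g' ∧ w g < w g')

/-- A local peak is strictly fitter than all Hamming neighbors. -/
def LocalPeak {L : ℕ} (w : (Fin L → Bool) → ℝ) (g : Fin L → Bool) : Prop :=
  ∀ g', Adj g g' → w g' < w g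

/-- `c` is a possible recombinant of parents `a` and `b`. -/
def Recomb {L : ℕ} (c a b : Fin L → Bool) : Prop :=
  ∀ i, c i = a i ∨ c i = b i

theorem stmt2 (w : (Fin 2 → Bool) → ℝ) (hinj : Function.Injective w) :
    ¬ ∃ (gmax g1 g2 : Fin 2 → Bool),
      (∀ g, g ≠ gmax → w g < w gmax) ∧
      (¬ AscPath w ![false, false] gmax) ∧
      (gmax 0 = g1 0 ∧ gmax 1 = g2 1) ∧
      (AscPath w ![false, false] g1 ∧ AscPath w ![false, false] g2) ∧
      (LocalPeak w g1 ∧ LocalPeak w g2) := by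
  rintro ⟨gmax, g1, g2, hmax, hnoasc, ⟨hb0, hb1⟩, ⟨hp1, hp2⟩, ⟨hl1, hl2⟩⟩
  by_cases heq : g1 = gmax
  · exact hnoasc (heq ▸ hp1)
  · have hne1 : g1 1 ≠ gmax 1 := by
      intro h
      apply heq
      funext i
      fin_cases i
      · exact hb0.symm
      · exact h
    have hadj : Adj g1 gmax := by
      unfold Adj
      have : Finset.univ.filter (fun i : Fin 2 => g1 i ≠ gmax i) = {1} := by
        ext i
        fin_cases i <;> simp [hb0.symm, hne1]
      rw [this]
      rfl
    exact absurd (hmax g1 heq) (not_lt.2 (le_of_lt (hl1 gmax hadj)))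
end

section
/- Define w : {0,1}⁴ → ℝ satisfying the Example 2 conditions: w(1000), w(0100), w(0010), w(0001) > w(0000); w(1100) > w(1000), w(0100); w(0011) > w(0010), w(0001); w(1111) > w(1100), w(0011); all genotypes in {1001, 1010, 0110, 0101, 1110, 1101, 1011, 0111} have fitness less than w(0000); and 1111 is the global maximum. Then there is no strictly increasing Hamming path from 0000 to 1111. -/
lemma adj_last (g : Fin 4 → Bool) (h : Adj g ![true,true,true,true]) :
    g = ![false,true,true,true] ∨ g = ![true,false,true,true] ∨
    g = ![true,true,false,true] ∨ g = ![true,true,true,false] := by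
  revert h; revert g; unfold Adj; decide

theorem stmt7 (w : (Fin 4 → Bool) → ℝ)
    (h1000 : w ![false,false,false,false] < w ![true,false,false,false])
    (h0100 : w ![false,false,false,false] < w ![false,true,false,false])
    (h0010 : w ![false,false,false,false] < w ![false,false,true,false])
    (h0001 : w ![false,false,false,false] < w ![false,false,false,true])
    (h1100a : w ![true,false,false,false] < w ![true,true,false,false])
    (h1100b : w ![false,true,false,false] < w ![true,true,false,false])
    (h0011a : w ![false,false,true,false] < w ![false,false,true,true])
    (h0011b : w ![false,false,false,true] < w ![false,false,true,true])
    (h1111a : w ![true,true,false,false] < w ![true,true,true,true])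
    (h1111b : w ![false,false,true,true] < w ![true,true,true,true])
    (hlow : ∀ g ∈ ({![true,false,false,true], ![true,false,true,false],
        ![false,true,true,false], ![false,true,false,true],
        ![true,true,true,false], ![true,true,false,true],
        ![true,false,true,true], ![false,true,true,true]} : Set (Fin 4 → Bool)),
      w g < w ![false,false,false,false])
    (hmax : ∀ g, g ≠ ![true,true,true,true] → w g < w ![true,true,true,true]) :
    ¬ AscPath w ![false,false,false,false] ![true,true,true,true] := by
  intro hpath
  have mono : ∀ g, AscPath w ![false,false,false,false] g → w ![false,false,false,false] ≤ w g := by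
    intro g h
    induction h with
    | refl => exact le_refl _
    | tail _ step ih => exact le_trans ih (le_of_lt step.2)
  rcases hpath.cases_tail with heq | ⟨mid, hmid, hstep⟩
  · have := congrFun heq 0; simp at this
  · have hle := mono mid hmid
    have hlt : w mid < w ![false,false,false,false] := by
      rcases adj_last mid hstep.1 with h | h | h | h <;> subst h <;> apply hlow <;> simp
    linarith
end

section
/- If a sequence p_n ∈ (0,1) satisfies p_{n+1} ≥ C₁p_n/(C₁p_n + C₂(1-p_n)) for all n, where C₁ > C₂ > 0, then p_n → 1 as n → ∞. -/
theorem stmt13 (p : ℕ → ℝ) (C1 C2 : ℝ) (hC : C2 < C1) (hC2 : 0 < C2)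
    (hmem : ∀ n, p n ∈ Set.Ioo (0 : ℝ) 1)
    (hrec : ∀ n, p (n + 1) ≥ C1 * p n / (C1 * p n + C2 * (1 - p n))) :
    Filter.Tendsto p Filter.atTop (nhds 1) := by
  have hC1 : 0 < C1 := hC2.trans hC
  set r : ℝ := C2 / C1 with hr
  have hr0 : 0 ≤ r := le_of_lt (div_pos hC2 hC1)
  have hr1 : r < 1 := (div_lt_one hC1).mpr hC
  set q : ℕ → ℝ := fun n => (1 - p n) / p n with hqdef
  have hq0 : ∀ n, 0 ≤ q n := fun n => by
    have h := hmem n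
    exact div_nonneg (by linarith [h.2]) (le_of_lt h.1)
  have hstep : ∀ n, q (n + 1) ≤ r * q n := by
    intro n
    obtain ⟨hp0, hp1⟩ := hmem n
    obtain ⟨hp0', hp1'⟩ := hmem (n + 1)
    have hD : 0 < C1 * p n + C2 * (1 - p n) := by nlinarith
    have hnum : 0 < C1 * p n := by positivity
    have hlb : C1 * p n / (C1 * p n + C2 * (1 - p n)) ≤ p (n + 1) := hrec n
    have hlb0 : 0 < C1 * p n / (C1 * p n + C2 * (1 - p n)) := div_pos hnum hD
    have hinv : 1 / p (n + 1) ≤ (C1 * p n + C2 * (1 - p n)) / (C1 * p n) := by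
      rw [div_le_div_iff₀ hp0' hnum]
      have := (div_le_iff₀ hD).mp hlb
      linarith
    have hq1 : q (n + 1) = 1 / p (n + 1) - 1 := by
      simp only [hqdef]
      field_simp
    have hq2 : r * q n = (C1 * p n + C2 * (1 - p n)) / (C1 * p n) - 1 := by
      simp only [hqdef, hr]
      field_simp
      ring
    rw [hq1, hq2]
    linarith
  have hgeo : ∀ n, q n ≤ r ^ n * q 0 := by
    intro n
    induction n with
    | zero => simp
    | succ k ih =>
      calc q (k + 1) ≤ r * q k := hstep k
        _ ≤ r * (r ^ k * q 0) := by
            exact mul_le_mul_of_nonneg_left ih hr0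
        _ = r ^ (k + 1) * q 0 := by ring
  have hqlim : Filter.Tendsto q Filter.atTop (nhds 0) := by
    have hlim : Filter.Tendsto (fun n => r ^ n * q 0) Filter.atTop (nhds 0) := by
      have := (tendsto_pow_atTop_nhds_zero_of_lt_one hr0 hr1).mul_const (q 0)
      simpa using this
    exact squeeze_zero hq0 hgeo hlim
  have hlower : ∀ n, 1 - q n ≤ p n := by
    intro n
    obtain ⟨hp0, hp1⟩ := hmem n
    have : q n ≥ 1 - p n := by
      rw [hqdef]
      rw [ge_iff_le, le_div_iff₀ hp0]
      nlinarith
    linarith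
  have hupper : ∀ n, p n ≤ 1 := fun n => le_of_lt (hmem n).2
  have h1 : Filter.Tendsto (fun n => 1 - q n) Filter.atTop (nhds 1) := by
    have := hqlim.const_sub 1
    simpa using this
  exact tendsto_of_tendsto_of_tendsto_of_le_of_le h1 tendsto_const_nhds hlower hupper
end

section
/- For 0 ≤ r < 1 and w_max > w_max' > 0, the one-step update T(p) = w_max(1-r)p / (w_max(1-r)p + w_max'(1+r)(1-p)) satisfies T(p) > p for all p ∈ (0,1) if and only if r < (w_max - w_max')/(w_max + w_max'). -/
theorem stmt17 (wmax wmax' r : ℝ) (hr0 : 0 ≤ r) (hr1 : r < 1)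
    (hw : wmax' < wmax) (hw' : 0 < wmax') :
    (∀ p ∈ Set.Ioo (0 : ℝ) 1,
        wmax * (1 - r) * p /
            (wmax * (1 - r) * p + wmax' * (1 + r) * (1 - p)) > p) ↔
      r < (wmax - wmax') / (wmax + wmax') := by
  have hwpos : 0 < wmax := hw'.trans hw
  have hsum : 0 < wmax + wmax' := by linarith
  constructor
  · intro h
    have h2 := h (1/2) ⟨by norm_num, by norm_num⟩
    have hden : 0 < wmax * (1 - r) * (1/2) + wmax' * (1 + r) * (1 - 1/2) := by
      nlinarith
    rw [gt_iff_lt, lt_div_iff₀ hden] at h2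
    rw [lt_div_iff₀ hsum]
    nlinarith
  · intro h p hp
    obtain ⟨hp0, hp1⟩ := hp
    rw [lt_div_iff₀ hsum] at h
    have hAB : wmax' * (1 + r) < wmax * (1 - r) := by nlinarith
    have hden : 0 < wmax * (1 - r) * p + wmax' * (1 + r) * (1 - p) := by
      nlinarith
    rw [gt_iff_lt, lt_div_iff₀ hden]
    nlinarith [mul_pos hp0 (sub_pos.mpr hp1)]
end
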